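/- Let f: ℝⁿ → ℝ be the quadratic f(x) = ½⟨Hx,x⟩ + ⟨h,x⟩ with H positive semidefinite, L = λ_max(H), m = λ_min(H) ≥ 0, and γ ∈ (0, 1/L). Let g: ℝⁿ → ℝ ∪ {∞} be proper closed convex and define the forward-backward envelope F(x) = γ⁻¹(⟨x - γ∇f(x), x⟩ - (½‖x‖² - γf(x)) - r*_{γg}(x - γ∇f(x))), where r_{γg}(x) = γg(x) + ½‖x‖². Then F is γ⁻¹(1-γm)-smooth and min((1-γm)m, (1-γL)L)-strongly convex with respect to the Euclidean norm. -/

import Mathlib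

open scoped RealInnerProductSpace Topology
open Filter

set_option maxHeartbeats 1000000

/-- Fenchel conjugate of an extended-real-valued function. -/
noncomputable def econj {n : ℕ} (g : EuclideanSpace ℝ (Fin n) → EReal)
    (y : EuclideanSpace ℝ (Fin n)) : EReal :=
  ⨆ x, ((⟪y, x⟫ : ℝ) : EReal) - g x

/-- `g` is proper: somewhere finite and never `-∞`. -/
def EProper {n : ℕ} (g : EuclideanSpace ℝ (Fin n) → EReal) : Prop :=
  (∃ x, g x ≠ ⊤) ∧ ∀ x, g x ≠ ⊥

/-- Convexity for extended-real-valued functions. -/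
def EConvex {n : ℕ} (g : EuclideanSpace ℝ (Fin n) → EReal) : Prop :=
  ∀ x y : EuclideanSpace ℝ (Fin n), ∀ a b : ℝ, 0 ≤ a → 0 ≤ b → a + b = 1 →
    g (a • x + b • y) ≤ (a : EReal) * g x + (b : EReal) * g y

/-- `p` is the proximal point `prox_{γ g}(z)`, i.e. it minimizes
`g(·) + ‖· - z‖²/(2γ)`. -/
def IsProx {n : ℕ} (g : EuclideanSpace ℝ (Fin n) → EReal) (γ : ℝ)
    (z p : EuclideanSpace ℝ (Fin n)) : Prop :=
  ∀ y, g p + ((‖p - z‖^2 / (2*γ) : ℝ) : EReal) ≤ g y + ((‖y - z‖^2 / (2*γ) : ℝ) : EReal)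

/-- `r_{γg}(x) = γ g(x) + ½‖x‖²`. -/
noncomputable def rfun {n : ℕ} (g : EuclideanSpace ℝ (Fin n) → EReal) (γ : ℝ)
    (x : EuclideanSpace ℝ (Fin n)) : EReal :=
  (γ : EReal) * g x + ((‖x‖^2 / 2 : ℝ) : EReal)

lemma ereal_cases (x : EReal) (hb : x ≠ ⊥) : x = ⊤ ∨ ∃ r : ℝ, x = (r : EReal) := by
  induction x with
  | bot => exact absurd rfl hb
  | coe r => exact Or.inr ⟨r, rfl⟩
  | top => exact Or.inl rfl

lemma ereal_real_of_le_coe {x : EReal} {a : ℝ} (h : x ≤ (a:EReal)) (hb : x ≠ ⊥) :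
    ∃ r : ℝ, x = (r:EReal) ∧ r ≤ a := by
  rcases ereal_cases x hb with h'|⟨r, h'⟩
  · rw [h'] at h; exact absurd h (by simp)
  · exact ⟨r, h', EReal.coe_le_coe_iff.mp (h' ▸ h)⟩

lemma epi_closed {n : ℕ} (g : EuclideanSpace ℝ (Fin n) → EReal)
    (hglsc : LowerSemicontinuous g) :
    IsClosed {p : EuclideanSpace ℝ (Fin n) × ℝ | g p.1 ≤ (p.2 : EReal)} := by
  rw [← isOpen_compl_iff, isOpen_iff_mem_nhds]
  rintro ⟨x, t⟩ hp
  simp only [Set.mem_compl_iff, Set.mem_setOf_eq, not_le] at hp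
  obtain ⟨t', ht1, ht2⟩ : ∃ t' : ℝ, t < t' ∧ (t' : EReal) < g x := by
    rcases ereal_cases (g x) (fun hb => by simp [hb] at hp) with h|⟨r, h⟩
    · exact ⟨t + 1, by linarith, by rw [h]; exact EReal.coe_lt_top _⟩
    · refine ⟨(t + r) / 2, ?_, ?_⟩
      · have : (t : EReal) < (r : EReal) := h ▸ hp
        have := EReal.coe_lt_coe_iff.mp this
        linarith
      · have : (t : EReal) < (r : EReal) := h ▸ hp
        have hr := EReal.coe_lt_coe_iff.mp this
        rw [h]
        exact_mod_cast (by linarith : (t + r)/2 < r)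
  have h1 : ∀ᶠ x' in 𝓝 x, (t' : EReal) < g x' := hglsc x _ ht2
  have h2 : ∀ᶠ s in 𝓝 t, s < t' := Filter.Tendsto.eventually_lt_const ht1 Filter.tendsto_id
  have := h1.prod_mk h2
  rw [← nhds_prod_eq] at this
  filter_upwards [this] with p hp'
  simp only [Set.mem_compl_iff, Set.mem_setOf_eq, not_le]
  exact lt_trans (EReal.coe_lt_coe_iff.mpr hp'.2) hp'.1

lemma affine_minorant {n : ℕ} (g : EuclideanSpace ℝ (Fin n) → EReal)
    (hgp : (∃ x, g x ≠ ⊤) ∧ ∀ x, g x ≠ ⊥) (hglsc : LowerSemicontinuous g)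
    (hgc : ∀ x y : EuclideanSpace ℝ (Fin n), ∀ a b : ℝ, 0 ≤ a → 0 ≤ b → a + b = 1 →
      g (a • x + b • y) ≤ (a : EReal) * g x + (b : EReal) * g y) :
    ∃ (v : EuclideanSpace ℝ (Fin n)) (c : ℝ), ∀ x, ((⟪v, x⟫ + c : ℝ) : EReal) ≤ g x := by
  classical
  obtain ⟨x₀, hx₀⟩ := hgp.1
  obtain ⟨r₀, hr₀⟩ : ∃ r₀ : ℝ, g x₀ = (r₀ : EReal) := by
    rcases ereal_cases (g x₀) (hgp.2 x₀) with h|h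
    · exact absurd h hx₀
    · exact h
  set S : Set (EuclideanSpace ℝ (Fin n) × ℝ) := {p | g p.1 ≤ (p.2 : EReal)} with hS
  have hSconv : Convex ℝ S := by
    rintro ⟨x, s⟩ hx ⟨y, t⟩ hy a b ha hb hab
    simp only [hS, Set.mem_setOf_eq] at hx hy ⊢
    obtain ⟨rx, hrx, hrx'⟩ := ereal_real_of_le_coe hx (hgp.2 x)
    obtain ⟨ry, hry, hry'⟩ := ereal_real_of_le_coe hy (hgp.2 y)
    have := hgc x y a b ha hb hab
    rw [hrx, hry] at this
    refine le_trans this ?_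
    rw [← EReal.coe_mul, ← EReal.coe_mul, ← EReal.coe_add]
    have : a * rx + b * ry ≤ a * s + b * t := by
      exact add_le_add (mul_le_mul_of_nonneg_left hrx' ha) (mul_le_mul_of_nonneg_left hry' hb)
    exact_mod_cast this
  have hSclosed := epi_closed g hglsc
  have hq : ((x₀, r₀ - 1) : EuclideanSpace ℝ (Fin n) × ℝ) ∉ S := by
    simp only [hS, Set.mem_setOf_eq, hr₀, not_le]
    exact_mod_cast (by linarith : r₀ - 1 < r₀)
  obtain ⟨f, u, hfq, hfS⟩ := geometric_hahn_banach_point_closed hSconv hSclosed hq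
  set β : ℝ := f (0, 1) with hβ
  have hdecomp : ∀ (x : EuclideanSpace ℝ (Fin n)) (t : ℝ), f (x, t) = f (x, 0) + t * β := by
    intro x t
    have : ((x, t) : EuclideanSpace ℝ (Fin n) × ℝ) = (x, 0) + t • (0, 1) := by
      simp [Prod.ext_iff]
    rw [this, map_add, map_smul, smul_eq_mul, hβ]
  have hmem : ∀ x (r : ℝ), g x ≤ (r : EReal) → u < f (x, 0) + r * β := by
    intro x r hr
    have := hfS (x, r) hr
    rwa [hdecomp] at this
  have hβpos : 0 < β := by
    have h1 := hmem x₀ r₀ (le_of_eq hr₀)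
    have h2 : f (x₀, r₀ - 1) < u := hfq
    rw [hdecomp] at h2
    nlinarith
  obtain ⟨v, hv⟩ : ∃ v, ∀ x, ⟪v, x⟫ = f (x, 0) := by
    refine ⟨(InnerProductSpace.toDual ℝ _).symm
      (f.comp (LinearMap.inl ℝ _ ℝ).toContinuousLinearMap), fun x => ?_⟩
    simp [InnerProductSpace.toDual_symm_apply]
  refine ⟨(-β⁻¹) • v, u / β, fun x => ?_⟩
  rcases ereal_cases (g x) (hgp.2 x) with h|⟨r, h⟩
  · simp [h]
  · rw [h]
    have hur := hmem x r (le_of_eq h)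
    rw [← hv] at hur
    have hineq : ⟪(-β⁻¹) • v, x⟫ + u / β ≤ r := by
      rw [real_inner_smul_left, div_eq_mul_inv]
      have key : (u - ⟪v, x⟫) * β⁻¹ < r := by
        rw [← div_eq_mul_inv, div_lt_iff₀ hβpos]; linarith
      linarith [key]
    exact_mod_cast hineq

lemma prox_exists {n : ℕ} (g : EuclideanSpace ℝ (Fin n) → EReal)
    (hbot : ∀ x, g x ≠ ⊥) (hglsc : LowerSemicontinuous g)
    (γ : ℝ) (hγ0 : 0 < γ)
    (v : EuclideanSpace ℝ (Fin n)) (c : ℝ) (hmin : ∀ x, ((⟪v, x⟫ + c : ℝ) : EReal) ≤ g x)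
    (x₀ : EuclideanSpace ℝ (Fin n)) (hx₀ : g x₀ ≠ ⊤)
    (z : EuclideanSpace ℝ (Fin n)) :
    ∃ p, IsProx g γ z p ∧ g p ≠ ⊤ := by
  classical
  set q : EuclideanSpace ℝ (Fin n) → ℝ := fun w => ‖w - z‖^2 / (2*γ) with hq
  set Φ : EuclideanSpace ℝ (Fin n) → EReal := fun w => g w + ((q w : ℝ) : EReal) with hΦ
  have hqcont : Continuous q := by
    apply Continuous.div_const
    exact (continuous_norm.comp (continuous_id.sub continuous_const)).pow 2
  have hΦlsc : LowerSemicontinuous Φ := by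
    apply hglsc.add' ((continuous_coe_real_ereal.comp hqcont).lowerSemicontinuous)
    intro x
    apply EReal.continuousAt_add
    · exact Or.inr (EReal.coe_ne_bot _)
    · exact Or.inr (EReal.coe_ne_top _)
  have hΦlow : ∀ w, ((⟪v, w⟫ + c + q w : ℝ) : EReal) ≤ Φ w := by
    intro w
    rw [EReal.coe_add]
    exact add_le_add_left (hmin w) _
  obtain ⟨r₀, hr₀⟩ : ∃ r₀ : ℝ, g x₀ = (r₀ : EReal) := by
    rcases ereal_cases (g x₀) (hbot x₀) with h|h
    · exact absurd h hx₀
    · exact h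
  set M : ℝ := r₀ + q x₀ with hM
  have hΦx₀ : Φ x₀ = (M : EReal) := by rw [hΦ]; simp only [hr₀, hM, EReal.coe_add]
  set K : Set (EuclideanSpace ℝ (Fin n)) := {w | Φ w ≤ (M : EReal)} with hK
  have hKx₀ : x₀ ∈ K := by simp [hK, hΦx₀]
  have hKclosed : IsClosed K := hΦlsc.isClosed_preimage M
  set C : ℝ := M - c + ‖v‖ * ‖z‖ with hC
  set R : ℝ := 2*γ*‖v‖ + Real.sqrt (2*γ*(max C 0)) + 1 with hR
  have hKsub : K ⊆ Metric.closedBall z R := by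
    intro w hw
    have h1 : ((⟪v, w⟫ + c + q w : ℝ) : EReal) ≤ (M : EReal) := le_trans (hΦlow w) hw
    have h2 : ⟪v, w⟫ + c + q w ≤ M := EReal.coe_le_coe_iff.mp h1
    have h3 : -(‖v‖ * ‖w‖) ≤ ⟪v, w⟫ := neg_le_of_neg_le (by
      have := abs_real_inner_le_norm v w
      cases abs_le.mp this; linarith)
    have h4 : ‖w‖ ≤ ‖z‖ + ‖w - z‖ := by
      have hzw : z + (w - z) = w := by abel
      calc ‖w‖ = ‖z + (w - z)‖ := by rw [hzw]
      _ ≤ ‖z‖ + ‖w - z‖ := norm_add_le _ _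
    set d : ℝ := ‖w - z‖ with hd
    have hd0 : 0 ≤ d := norm_nonneg _
    have hv0 : (0:ℝ) ≤ ‖v‖ := norm_nonneg _
    have h5 : d^2 ≤ 2*γ*(C + ‖v‖ * d) := by
      have h2γ : 0 < 2*γ := by linarith
      have hdiv : d^2/(2*γ) ≤ M - c - ⟪v, w⟫ := by
        have : q w = d^2/(2*γ) := rfl
        rw [this] at h2; linarith
      have h2' : d^2 ≤ (M - c - ⟪v, w⟫) * (2*γ) := (div_le_iff₀ h2γ).mp hdiv
      have h3' : -⟪v, w⟫ ≤ ‖v‖*(‖z‖+d) := by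
        nlinarith [mul_le_mul_of_nonneg_left h4 hv0]
      nlinarith [mul_le_mul_of_nonneg_right h3' (by linarith : (0:ℝ) ≤ 2*γ)]
    simp only [Metric.mem_closedBall, dist_eq_norm]
    show d ≤ R
    by_contra hcon
    push_neg at hcon
    set s : ℝ := Real.sqrt (2*γ*(max C 0)) with hs
    have hs0 : 0 ≤ s := Real.sqrt_nonneg _
    have hs2 : s^2 = 2*γ*(max C 0) := Real.sq_sqrt (by positivity)
    have hCmax : C ≤ max C 0 := le_max_left _ _
    have hsd : s ≤ d := by rw [hR] at hcon; nlinarith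
    nlinarith [mul_le_mul_of_nonneg_right hsd hs0,
      mul_le_mul_of_nonneg_left hCmax (by linarith : (0:ℝ) ≤ 2*γ)]
  have hKcpt : IsCompact K :=
    (isCompact_closedBall z R).of_isClosed_subset hKclosed hKsub
  set c₀ : EReal := ⨅ w : K, Φ w with hc₀
  have hc₀M : c₀ ≤ (M : EReal) :=
    le_trans (iInf_le _ (⟨x₀, hKx₀⟩ : K)) (le_of_eq hΦx₀)
  haveI : Nonempty {r : ℝ // c₀ < (r : EReal)} :=
    ⟨⟨M + 1, lt_of_le_of_lt hc₀M (by exact_mod_cast (by linarith : M < M + 1))⟩⟩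
  set A : {r : ℝ // c₀ < (r : EReal)} → Set (EuclideanSpace ℝ (Fin n)) :=
    fun r => {w ∈ K | Φ w ≤ ((r : ℝ) : EReal)} with hA
  have hAclosed : ∀ r, IsClosed (A r) := fun r =>
    hKclosed.inter (hΦlsc.isClosed_preimage _)
  have hAcpt : ∀ r, IsCompact (A r) := fun r =>
    hKcpt.of_isClosed_subset (hAclosed r) (Set.sep_subset _ _)
  have hAne : ∀ r, (A r).Nonempty := by
    rintro ⟨r, hr⟩
    rw [hc₀, iInf_lt_iff] at hr
    obtain ⟨⟨w, hwK⟩, hw⟩ := hr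
    exact ⟨w, hwK, le_of_lt hw⟩
  have hAdir : Directed (· ⊇ ·) A := by
    rintro ⟨r₁, hr₁⟩ ⟨r₂, hr₂⟩
    refine ⟨⟨min r₁ r₂, ?_⟩, ?_, ?_⟩
    · rcases le_total r₁ r₂ with h|h
      · simpa [min_eq_left h] using hr₁
      · simpa [min_eq_right h] using hr₂
    · rintro w ⟨hwK, hw⟩
      exact ⟨hwK, le_trans hw (by exact_mod_cast min_le_left r₁ r₂)⟩
    · rintro w ⟨hwK, hw⟩
      exact ⟨hwK, le_trans hw (by exact_mod_cast min_le_right r₁ r₂)⟩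
  obtain ⟨p, hp⟩ := IsCompact.nonempty_iInter_of_directed_nonempty_isCompact_isClosed
    A hAdir hAne hAcpt hAclosed
  rw [Set.mem_iInter] at hp
  have hΦp : Φ p ≤ c₀ := by
    by_contra hcon
    push_neg at hcon
    obtain ⟨r, hr1, hr2⟩ := EReal.exists_between_coe_real hcon
    exact absurd ((hp ⟨r, hr1⟩).2) (not_le.mpr hr2)
  have hmin' : ∀ y, Φ p ≤ Φ y := by
    intro y
    by_cases hy : y ∈ K
    · exact le_trans hΦp (iInf_le _ (⟨y, hy⟩ : K))
    · have hM' : Φ p ≤ (M : EReal) := le_trans hΦp hc₀M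
      exact le_trans hM' (le_of_not_ge hy)
  refine ⟨p, hmin', ?_⟩
  intro htop
  have hPtop : Φ p = ⊤ := by rw [hΦ]; simp only [htop]; exact EReal.top_add_coe _
  have := le_trans (le_trans (le_of_eq hPtop.symm) hΦp) hc₀M
  exact absurd this (by simp)

lemma norm_combo {n : ℕ} (u v : EuclideanSpace ℝ (Fin n)) (t : ℝ) :
    ‖(1-t) • u + t • v‖^2 = (1-t)*‖u‖^2 + t*‖v‖^2 - t*(1-t)*‖u-v‖^2 := by
  have h1 := norm_add_sq_real ((1-t) • u) (t • v)
  have h2 := norm_sub_sq_real u v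
  rw [norm_smul, norm_smul, real_inner_smul_left, real_inner_smul_right] at h1
  simp only [Real.norm_eq_abs, mul_pow, sq_abs] at h1
  nlinarith [h1, h2]

lemma prox_growth {n : ℕ} (g : EuclideanSpace ℝ (Fin n) → EReal)
    (hbot : ∀ x, g x ≠ ⊥)
    (hgc : ∀ x y : EuclideanSpace ℝ (Fin n), ∀ a b : ℝ, 0 ≤ a → 0 ≤ b → a + b = 1 →
      g (a • x + b • y) ≤ (a : EReal) * g x + (b : EReal) * g y)
    (γ : ℝ) (hγ0 : 0 < γ) (z p : EuclideanSpace ℝ (Fin n))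
    (hprox : IsProx g γ z p) (hgptop : g p ≠ ⊤) :
    ∀ y, g p + ((‖p - z‖^2 / (2*γ) + ‖y - p‖^2 / (2*γ) : ℝ) : EReal)
      ≤ g y + ((‖y - z‖^2 / (2*γ) : ℝ) : EReal) := by
  intro y
  obtain ⟨gp, hgp⟩ : ∃ r : ℝ, g p = (r : EReal) := by
    rcases ereal_cases (g p) (hbot p) with h|h
    · exact absurd h hgptop
    · exact h
  rcases ereal_cases (g y) (hbot y) with hy|⟨gy, hy⟩
  · rw [hy, EReal.top_add_coe]; exact le_top
  rw [hgp, hy, ← EReal.coe_add, ← EReal.coe_add, EReal.coe_le_coe_iff]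
  set P : ℝ := ‖p - z‖^2 with hP
  set Y : ℝ := ‖y - z‖^2 with hY
  set D : ℝ := ‖y - p‖^2 with hD
  have hD0 : 0 ≤ D := by positivity
  have hstep : ∀ t : ℝ, 0 < t → t ≤ 1 →
      gp + P/(2*γ) ≤ gy + Y/(2*γ) - (1-t)*(D/(2*γ)) := by
    intro t ht0 ht1
    have hcvx := hgc p y (1-t) t (by linarith) (le_of_lt ht0) (by ring)
    rw [hgp, hy] at hcvx
    have hcvx' : g ((1-t) • p + t • y) ≤ (((1-t)*gp + t*gy : ℝ) : EReal) := by
      refine le_trans hcvx (le_of_eq ?_)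
      rw [EReal.coe_add, EReal.coe_mul, EReal.coe_mul]
    have hpr := hprox ((1-t) • p + t • y)
    rw [hgp] at hpr
    have hcomb : ((gp + P/(2*γ) : ℝ) : EReal)
        ≤ (((1-t)*gp + t*gy + ‖(1-t) • p + t • y - z‖^2/(2*γ) : ℝ) : EReal) := by
      calc ((gp + P/(2*γ) : ℝ) : EReal)
          = (gp : EReal) + ((P/(2*γ) : ℝ) : EReal) := EReal.coe_add _ _
        _ ≤ g ((1-t) • p + t • y) + ((‖(1-t) • p + t • y - z‖^2/(2*γ) : ℝ):EReal) := hpr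
        _ ≤ (((1-t)*gp + t*gy :ℝ):EReal) + ((‖(1-t) • p + t • y - z‖^2/(2*γ) : ℝ):EReal) :=
            add_le_add_left hcvx' _
        _ = _ := by rw [← EReal.coe_add]
    have hcombR := EReal.coe_le_coe_iff.mp hcomb
    have hvec : (1-t) • p + t • y - z = (1-t) • (p - z) + t • (y - z) := by module
    have hnorm : ‖(1-t) • p + t • y - z‖^2 = (1-t)*P + t*Y - t*(1-t)*D := by
      rw [hvec, norm_combo]
      have h1 : p - z - (y - z) = p - y := by abel
      rw [h1, norm_sub_rev p y]
    rw [hnorm] at hcombR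
    have h2 : t * (gp + P/(2*γ)) ≤ t * (gy + Y/(2*γ) - (1-t)*(D/(2*γ))) := by
      have hexp : t * (gy + Y/(2*γ) - (1-t)*(D/(2*γ))) - t * (gp + P/(2*γ))
          = ((1-t)*gp + t*gy + ((1-t)*P + t*Y - t*(1-t)*D)/(2*γ)) - (gp + P/(2*γ)) := by
        field_simp
        ring
      linarith
    exact le_of_mul_le_mul_left h2 ht0
  have hc : 0 ≤ D/(2*γ) := by positivity
  have goal' : gp + P/(2*γ) ≤ gy + Y/(2*γ) - D/(2*γ) := by
    refine le_of_forall_pos_le_add ?_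
    intro ε hε
    by_cases hDz : D/(2*γ) = 0
    · have := hstep 1 one_pos le_rfl
      rw [hDz] at *
      linarith [hstep 1 one_pos le_rfl]
    · have hDpos : 0 < D/(2*γ) := lt_of_le_of_ne hc (Ne.symm hDz)
      set t := min 1 (ε/(D/(2*γ))) with htdef
      have ht0 : 0 < t := lt_min one_pos (div_pos hε hDpos)
      have ht1 : t ≤ 1 := min_le_left _ _
      have hst := hstep t ht0 ht1
      have htc : t*(D/(2*γ)) ≤ ε := by
        calc t*(D/(2*γ)) ≤ (ε/(D/(2*γ)))*(D/(2*γ)) :=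
              mul_le_mul_of_nonneg_right (min_le_right _ _) hc
          _ = ε := div_mul_cancel₀ _ (ne_of_gt hDpos)
      linarith
  linarith

lemma psd_bound {n : ℕ} (A : EuclideanSpace ℝ (Fin n) →L[ℝ] EuclideanSpace ℝ (Fin n))
    (hsa : ∀ x y, ⟪A x, y⟫ = ⟪x, A y⟫) (c : ℝ)
    (h0 : ∀ x, 0 ≤ ⟪A x, x⟫) (hc : ∀ x, ⟪A x, x⟫ ≤ c * ‖x‖^2) :
    ∀ x, ‖A x‖^2 ≤ c * ⟪A x, x⟫ := by
  intro x
  have h3 : ⟪A (A x), x⟫ = ‖A x‖^2 := by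
    rw [hsa (A x) x, real_inner_comm, real_inner_self_eq_norm_sq]
  have hquad : ∀ t : ℝ, 0 ≤ ⟪A (A x), A x⟫ * (t*t) + (2*‖A x‖^2) * t + ⟪A x, x⟫ := by
    intro t
    have h := h0 (x + t • (A x))
    have e1 : A (x + t • A x) = A x + t • A (A x) := by rw [map_add, map_smul]
    rw [e1] at h
    simp only [inner_add_left, inner_add_right, real_inner_smul_left, real_inner_smul_right] at h
    rw [h3, real_inner_self_eq_norm_sq] at h
    nlinarith [h]
  have hdisc := discrim_le_zero (a := ⟪A (A x), A x⟫) (b := 2*‖A x‖^2) (c := ⟪A x, x⟫) hquad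
  rw [discrim] at hdisc
  have hB : ⟪A (A x), A x⟫ ≤ c * ‖A x‖^2 := hc (A x)
  rcases eq_or_ne (‖A x‖^2) 0 with hz|hz
  · have h00 : ‖A x‖ = 0 := by
      have := sq_abs ‖A x‖
      nlinarith [norm_nonneg (A x), hz]
    have h0' : A x = 0 := norm_eq_zero.mp h00
    rw [hz, h0', inner_zero_left]
    simp
  · have hpos : 0 < ‖A x‖^2 := lt_of_le_of_ne (by positivity) (Ne.symm hz)
    nlinarith [hdisc, mul_le_mul_of_nonneg_right hB (h0 x), hpos]

lemma spec_ineq {n : ℕ} (H : EuclideanSpace ℝ (Fin n) →L[ℝ] EuclideanSpace ℝ (Fin n))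
    (hsa : ∀ x y, ⟪H x, y⟫ = ⟪x, H y⟫) (m L : ℝ) (hm0 : 0 ≤ m)
    (hbounds : ∀ x, m * ‖x‖^2 ≤ ⟪H x, x⟫ ∧ ⟪H x, x⟫ ≤ L * ‖x‖^2)
    (γ : ℝ) (hγ0 : 0 < γ) (hγL : γ * L < 1) :
    ∀ u, min ((1 - γ*m)*m) ((1 - γ*L)*L) * ‖u‖^2 ≤ ⟪H u, u⟫ - γ * ‖H u‖^2 := by
  intro u
  rcases eq_or_ne u 0 with rfl|hu
  · simp
  have hU : 0 < ‖u‖^2 := pow_pos (norm_pos_iff.mpr hu) 2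
  have hmL : m ≤ L := by
    have h := hbounds u
    nlinarith [h.1, h.2]
  set A : EuclideanSpace ℝ (Fin n) →L[ℝ] EuclideanSpace ℝ (Fin n) :=
    H - m • ContinuousLinearMap.id ℝ _ with hA
  have hAapp : ∀ x, A x = H x - m • x := fun x => rfl
  have hsaA : ∀ x y, ⟪A x, y⟫ = ⟪x, A y⟫ := by
    intro x y
    rw [hAapp, hAapp, inner_sub_left, inner_sub_right, real_inner_smul_left,
      real_inner_smul_right, hsa]
  have h0A : ∀ x, 0 ≤ ⟪A x, x⟫ := by
    intro x
    rw [hAapp, inner_sub_left, real_inner_smul_left, real_inner_self_eq_norm_sq]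
    linarith [(hbounds x).1]
  have hcA : ∀ x, ⟪A x, x⟫ ≤ (L - m) * ‖x‖^2 := by
    intro x
    rw [hAapp, inner_sub_left, real_inner_smul_left, real_inner_self_eq_norm_sq]
    linarith [(hbounds x).2]
  have hK := psd_bound A hsaA (L - m) h0A hcA u
  rw [hAapp, inner_sub_left, real_inner_smul_left, real_inner_self_eq_norm_sq] at hK
  have hexp : ‖H u - m • u‖^2 = ‖H u‖^2 - 2*m*⟪H u, u⟫ + m^2*‖u‖^2 := by
    rw [norm_sub_sq_real, real_inner_smul_right, norm_smul]
    simp only [Real.norm_eq_abs, mul_pow, sq_abs]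
    ring
  rw [hexp] at hK
  have hK1 : ‖H u‖^2 ≤ (L + m)*⟪H u, u⟫ - L*m*‖u‖^2 := by nlinarith [hK]
  have hq1 := (hbounds u).1
  have hq2 := (hbounds u).2
  rcases le_or_gt 0 (1 - γ*(L+m)) with hsign|hsign
  · have h5 := mul_le_mul_of_nonneg_left hq1 hsign
    have h6 := mul_le_mul_of_nonneg_left hK1 (le_of_lt hγ0)
    have h7 := mul_le_mul_of_nonneg_right
      (min_le_left ((1 - γ*m)*m) ((1 - γ*L)*L)) (le_of_lt hU)
    nlinarith [h5, h6, h7]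
  · have h5 := mul_le_mul_of_nonneg_left hq2 (by linarith : (0:ℝ) ≤ γ*(L+m) - 1)
    have h6 := mul_le_mul_of_nonneg_left hK1 (le_of_lt hγ0)
    have h7 := mul_le_mul_of_nonneg_right
      (min_le_right ((1 - γ*m)*m) ((1 - γ*L)*L)) (le_of_lt hU)
    nlinarith [h5, h6, h7]

theorem stmt19 {n : ℕ}
    (H : EuclideanSpace ℝ (Fin n) →L[ℝ] EuclideanSpace ℝ (Fin n))
    (hHsa : ∀ x y, ⟪H x, y⟫ = ⟪x, H y⟫)
    (h : EuclideanSpace ℝ (Fin n))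
    (m L : ℝ) (hm0 : 0 ≤ m)
    (hbounds : ∀ x, m * ‖x‖^2 ≤ ⟪H x, x⟫ ∧ ⟪H x, x⟫ ≤ L * ‖x‖^2)
    (γ : ℝ) (hγ0 : 0 < γ) (hγL : γ * L < 1)
    (g : EuclideanSpace ℝ (Fin n) → EReal)
    (hgp : EProper g) (hglsc : LowerSemicontinuous g) (hgc : EConvex g)
    (F : EuclideanSpace ℝ (Fin n) → ℝ)
    (hF : ∀ x, F x = γ⁻¹ * (⟪x - γ • (H x + h), x⟫ -
        (‖x‖^2 / 2 - γ * (⟪H x, x⟫ / 2 + ⟪h, x⟫)) -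
        (econj (rfun g γ) (x - γ • (H x + h))).toReal)) :
    (∃ F' : EuclideanSpace ℝ (Fin n) → EuclideanSpace ℝ (Fin n),
        (∀ x, HasGradientAt F (F' x) x) ∧
        ∀ x y, |F x - F y - ⟪F' y, x - y⟫| ≤ γ⁻¹ * (1 - γ * m) / 2 * ‖x - y‖^2) ∧
    ConvexOn ℝ Set.univ
      (fun x => F x - min ((1 - γ * m) * m) ((1 - γ * L) * L) / 2 * ‖x‖^2) := by
  classical
  obtain ⟨x₀, hx₀⟩ := hgp.1
  have hbot := hgp.2
  obtain ⟨vm, cm, hminor⟩ := affine_minorant g hgp hglsc hgc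
  have hproxE : ∀ z, ∃ p, IsProx g γ z p ∧ g p ≠ ⊤ :=
    prox_exists g hbot hglsc γ hγ0 vm cm hminor x₀ hx₀
  set P : EuclideanSpace ℝ (Fin n) → EuclideanSpace ℝ (Fin n) :=
    fun z => Classical.choose (hproxE z) with hPdef
  have hP : ∀ z, IsProx g γ z (P z) ∧ g (P z) ≠ ⊤ :=
    fun z => Classical.choose_spec (hproxE z)
  set gval : EuclideanSpace ℝ (Fin n) → ℝ := fun z => (g (P z)).toReal with hgvaldef
  have hgcoe : ∀ z, g (P z) = ((gval z : ℝ) : EReal) := by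
    intro z
    rcases ereal_cases _ (hbot (P z)) with h1|⟨r, h1⟩
    · exact absurd h1 (hP z).2
    · rw [h1]; simp only [hgvaldef, h1, EReal.toReal_coe]
  set Ψ : EuclideanSpace ℝ (Fin n) → ℝ := fun z => γ * gval z + ‖P z - z‖^2/2 with hΨdef
  set ρ : EuclideanSpace ℝ (Fin n) → ℝ := fun z => ‖z‖^2/2 - Ψ z with hρdef
  have hρeq : ∀ z, ρ z = ‖z‖^2/2 - Ψ z := fun z => rfl
  have hΨeq : ∀ z, Ψ z = γ * gval z + ‖P z - z‖^2/2 := fun z => rfl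
  -- real form of prox minimality
  have hproxR : ∀ z w (gw : ℝ), g w = (gw : EReal) → Ψ z ≤ γ*gw + ‖w - z‖^2/2 := by
    intro z w gw hgw
    have h1 := (hP z).1 w
    rw [hgcoe z, hgw, ← EReal.coe_add, ← EReal.coe_add, EReal.coe_le_coe_iff] at h1
    have hmul := mul_le_mul_of_nonneg_left h1 (le_of_lt hγ0)
    have e1 : γ*(gval z + ‖P z - z‖^2/(2*γ)) = γ*gval z + ‖P z - z‖^2/2 := by
      field_simp
    have e2 : γ*(gw + ‖w - z‖^2/(2*γ)) = γ*gw + ‖w - z‖^2/2 := by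
      field_simp
    rw [hΨeq]; linarith
  -- real form of quadratic growth
  have hgrowR : ∀ z w (gw : ℝ), g w = (gw : EReal) →
      Ψ z + ‖w - P z‖^2/2 ≤ γ*gw + ‖w - z‖^2/2 := by
    intro z w gw hgw
    have h1 := prox_growth g hbot hgc γ hγ0 z (P z) (hP z).1 (hP z).2 w
    rw [hgcoe z, hgw, ← EReal.coe_add, ← EReal.coe_add, EReal.coe_le_coe_iff] at h1
    have hmul := mul_le_mul_of_nonneg_left h1 (le_of_lt hγ0)
    have e1 : γ*(gval z + (‖P z - z‖^2/(2*γ) + ‖w - P z‖^2/(2*γ)))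
        = γ*gval z + ‖P z - z‖^2/2 + ‖w - P z‖^2/2 := by field_simp; ring
    have e2 : γ*(gw + ‖w - z‖^2/(2*γ)) = γ*gw + ‖w - z‖^2/2 := by field_simp
    rw [hΨeq]; linarith
  have hρid : ∀ z, ρ z = ⟪z, P z⟫ - γ*gval z - ‖P z‖^2/2 := by
    intro z
    rw [hρeq, hΨeq, norm_sub_sq_real, real_inner_comm z (P z)]
    ring
  -- the conjugate formula
  have hconj : ∀ z, econj (rfun g γ) z = ((ρ z : ℝ) : EReal) := by
    intro z
    apply le_antisymm
    · apply iSup_le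
      intro x
      rcases ereal_cases (g x) (hbot x) with hgx|⟨gx, hgx⟩
      · have hr : rfun g γ x = ⊤ := by
          rw [rfun, hgx, EReal.coe_mul_top_of_pos hγ0, EReal.top_add_coe]
        rw [hr, EReal.sub_top]
        exact bot_le
      · have hr : rfun g γ x = ((γ*gx + ‖x‖^2/2 : ℝ) : EReal) := by
          rw [rfun, hgx, ← EReal.coe_mul, ← EReal.coe_add]
        rw [hr, ← EReal.coe_sub, EReal.coe_le_coe_iff]
        have h1 := hproxR z x gx hgx
        have hxz : ‖x - z‖^2 = ‖x‖^2 - 2*⟪x,z⟫ + ‖z‖^2 := by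
          rw [norm_sub_sq_real]
        have hcomm : ⟪z,x⟫ = ⟪x,z⟫ := real_inner_comm _ _
        rw [hρeq]
        linarith
    · have key : ((ρ z : ℝ) : EReal) = ((⟪z, P z⟫ : ℝ) : EReal) - rfun g γ (P z) := by
        have hr : rfun g γ (P z) = ((γ*gval z + ‖P z‖^2/2 : ℝ) : EReal) := by
          rw [rfun, hgcoe z, ← EReal.coe_mul, ← EReal.coe_add]
        rw [hr, ← EReal.coe_sub]
        congr 1
        rw [hρid z]; ring
      rw [key]
      exact le_iSup (fun x => ((⟪z, x⟫ : ℝ) : EReal) - rfun g γ x) (P z)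
  -- lower bound on Bregman divergence of ρ
  have hDlow : ∀ s₁ s₂, ⟪P s₂, s₁ - s₂⟫ ≤ ρ s₁ - ρ s₂ := by
    intro s₁ s₂
    have h1 := hproxR s₁ (P s₂) (gval s₂) (hgcoe s₂)
    have e1 : ‖P s₂ - s₁‖^2 = ‖P s₂‖^2 - 2*⟪P s₂, s₁⟫ + ‖s₁‖^2 := by
      rw [norm_sub_sq_real]
    have e2 : ⟪P s₂, s₁ - s₂⟫ = ⟪P s₂, s₁⟫ - ⟪P s₂, s₂⟫ := inner_sub_right _ _ _
    have e3 : ⟪s₂, P s₂⟫ = ⟪P s₂, s₂⟫ := real_inner_comm _ _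
    have h2 := hρid s₂
    rw [hρeq s₁]
    linarith
  -- upper bound on Bregman divergence of ρ
  have hDup : ∀ s₁ s₂, ρ s₁ - ρ s₂ - ⟪P s₂, s₁ - s₂⟫ ≤ ‖s₁ - s₂‖^2/2 := by
    intro s₁ s₂
    have hg1 := hgrowR s₂ (P s₁) (gval s₁) (hgcoe s₁)
    have hΨ1 := hΨeq s₁
    have ee : P s₁ - s₁ = (P s₁ - s₂) + (s₂ - s₁) := by abel
    have e1 : ‖P s₁ - s₁‖^2
        = ‖P s₁ - s₂‖^2 + 2*⟪P s₁ - s₂, s₂ - s₁⟫ + ‖s₂ - s₁‖^2 := by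
      rw [ee, norm_add_sq_real]
    have e2 : ‖(P s₁ - P s₂) + (s₂ - s₁)‖^2
        = ‖P s₁ - P s₂‖^2 + 2*⟪P s₁ - P s₂, s₂ - s₁⟫ + ‖s₂ - s₁‖^2 := by
      rw [norm_add_sq_real]
    have e3 : (0:ℝ) ≤ ‖(P s₁ - P s₂) + (s₂ - s₁)‖^2 := by positivity
    have e4 : ⟪P s₂, s₁ - s₂⟫ = -⟪P s₂, s₂ - s₁⟫ := by
      have hss : s₁ - s₂ = -(s₂ - s₁) := by abel
      rw [hss, inner_neg_right]
    have e5 : ⟪P s₁ - s₂, s₂ - s₁⟫ = ⟪P s₁, s₂ - s₁⟫ - ⟪s₂, s₂ - s₁⟫ :=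
      inner_sub_left _ _ _
    have e6 : ⟪P s₁ - P s₂, s₂ - s₁⟫ = ⟪P s₁, s₂ - s₁⟫ - ⟪P s₂, s₂ - s₁⟫ :=
      inner_sub_left _ _ _
    have e7 : ⟪s₂, s₂ - s₁⟫ = ‖s₂‖^2 - ⟪s₁, s₂⟫ := by
      rw [inner_sub_right, real_inner_self_eq_norm_sq, real_inner_comm s₂ s₁]
    have e8 : ‖s₁ - s₂‖^2 = ‖s₁‖^2 - 2*⟪s₁,s₂⟫ + ‖s₂‖^2 := by
      rw [norm_sub_sq_real]
    have e9 : ‖s₂ - s₁‖^2 = ‖s₁‖^2 - 2*⟪s₁,s₂⟫ + ‖s₂‖^2 := by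
      rw [norm_sub_rev s₂ s₁]; exact e8
    rw [hρeq s₁, hρeq s₂]
    linarith
  -- the forward map
  set Y : EuclideanSpace ℝ (Fin n) → EuclideanSpace ℝ (Fin n) :=
    fun x => x - γ • (H x + h) with hYdef
  have hYeq : ∀ x, x - γ • (H x + h) = Y x := fun _ => rfl
  -- real formula for F
  have hFr : ∀ x, F x = γ⁻¹ * (‖x‖^2/2 - γ*⟪H x, x⟫/2 - ρ (Y x)) := by
    intro x
    have h1 := hF x
    rw [hYeq, hconj (Y x), EReal.toReal_coe] at h1
    have h2 : ⟪Y x, x⟫ = ‖x‖^2 - γ*⟪H x, x⟫ - γ*⟪h, x⟫ := by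
      show ⟪x - γ • (H x + h), x⟫ = _
      rw [inner_sub_left, real_inner_smul_left, inner_add_left,
        real_inner_self_eq_norm_sq]
      ring
    rw [h1, h2]
    ring
  -- candidate gradient
  set F' : EuclideanSpace ℝ (Fin n) → EuclideanSpace ℝ (Fin n) :=
    fun z => γ⁻¹ • ((z - P (Y z)) - γ • H (z - P (Y z))) with hF'def
  have hYsub : ∀ x z, Y x - Y z = (x - z) - γ • H (x - z) := by
    intro x z
    have hHu : H x - H z = H (x - z) := (map_sub H x z).symm
    show (x - γ • (H x + h)) - (z - γ • (H z + h)) = (x - z) - γ • H (x - z)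
    rw [← hHu]
    module
  -- Bregman identity
  have hBreg : ∀ x z, F x - F z - ⟪F' z, x - z⟫
      = γ⁻¹ * ((‖x - z‖^2 - γ*⟪H (x-z), x-z⟫)/2
        - (ρ (Y x) - ρ (Y z) - ⟪P (Y z), Y x - Y z⟫)) := by
    intro x z
    set u := x - z with hu
    have hxzu : x = z + u := by rw [hu]; abel
    have hFp : ⟪F' z, u⟫ = γ⁻¹ * ⟪(z - P (Y z)) - γ • H (z - P (Y z)), u⟫ :=
      real_inner_smul_left _ _ _
    have a1 : ‖x‖^2 = ‖z‖^2 + 2*⟪z,u⟫ + ‖u‖^2 := by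
      rw [hxzu, norm_add_sq_real]
    have a2 : ⟪H x, x⟫ = ⟪H z, z⟫ + 2*⟪H z, u⟫ + ⟪H u, u⟫ := by
      have hxH : H x = H z + H u := by rw [hxzu, map_add]
      rw [hxH, hxzu, inner_add_left, inner_add_right, inner_add_right]
      have : ⟪H u, z⟫ = ⟪H z, u⟫ := by rw [hHsa u z, real_inner_comm]
      linarith [this]
    have a3 : ⟪(z - P (Y z)) - γ • H (z - P (Y z)), u⟫
        = ⟪z,u⟫ - ⟪P (Y z), u⟫ - γ*⟪H z, u⟫ + γ*⟪H (P (Y z)), u⟫ := by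
      rw [inner_sub_left, inner_sub_left, real_inner_smul_left, map_sub,
        inner_sub_left]
      ring
    have a4 : ⟪P (Y z), Y x - Y z⟫ = ⟪P (Y z), u⟫ - γ*⟪P (Y z), H u⟫ := by
      rw [hYsub x z, inner_sub_right, real_inner_smul_right]
    have a5 : ⟪H (P (Y z)), u⟫ = ⟪P (Y z), H u⟫ := hHsa _ _
    rw [hFr x, hFr z, hFp, a3]
    linear_combination (γ⁻¹/2) * a1 - (γ⁻¹*γ/2) * a2 - γ⁻¹ * a4 - (γ⁻¹*γ) * a5
  -- norm of (I - γH)u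
  have hQnorm : ∀ u : EuclideanSpace ℝ (Fin n),
      ‖u - γ • H u‖^2 = ‖u‖^2 - 2*γ*⟪H u, u⟫ + γ^2*‖H u‖^2 := by
    intro u
    rw [norm_sub_sq_real, real_inner_smul_right, norm_smul]
    simp only [Real.norm_eq_abs, mul_pow, sq_abs]
    rw [real_inner_comm u (H u)]
    ring
  set σ : ℝ := min ((1 - γ*m)*m) ((1 - γ*L)*L) with hσdef
  -- strong convexity inequality
  have hstrong : ∀ x z, F z + ⟪F' z, x - z⟫ + σ/2 * ‖x - z‖^2 ≤ F x := by
    intro x z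
    rcases eq_or_ne x z with rfl|hxz
    · simp
    have hspec := spec_ineq H hHsa m L hm0 hbounds γ hγ0 hγL (x - z)
    rw [← hσdef] at hspec
    have hnrm : ‖Y x - Y z‖^2
        = ‖x - z‖^2 - 2*γ*⟪H (x-z), x-z⟫ + γ^2*‖H (x-z)‖^2 := by
      rw [hYsub x z, hQnorm]
    have hD := hDup (Y x) (Y z)
    rw [hnrm] at hD
    have hB := hBreg x z
    have hγinv : (0:ℝ) < γ⁻¹ := inv_pos.mpr hγ0
    have heq : γ⁻¹ * ((‖x - z‖^2 - γ*⟪H (x-z), x-z⟫)/2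
        - ((‖x - z‖^2 - 2*γ*⟪H (x-z), x-z⟫ + γ^2*‖H (x-z)‖^2)/2))
        = (⟪H (x-z), x-z⟫ - γ*‖H (x-z)‖^2)/2 := by
      field_simp
      ring
    have hmono : γ⁻¹ * ((‖x - z‖^2 - γ*⟪H (x-z), x-z⟫)/2
          - ((‖x - z‖^2 - 2*γ*⟪H (x-z), x-z⟫ + γ^2*‖H (x-z)‖^2)/2))
        ≤ γ⁻¹ * ((‖x - z‖^2 - γ*⟪H (x-z), x-z⟫)/2
          - (ρ (Y x) - ρ (Y z) - ⟪P (Y z), Y x - Y z⟫)) := by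
      apply mul_le_mul_of_nonneg_left _ (le_of_lt hγinv)
      linarith
    have hBge : (⟪H (x-z), x-z⟫ - γ*‖H (x-z)‖^2)/2 ≤ F x - F z - ⟪F' z, x - z⟫ := by
      rw [hB, ← heq]; exact hmono
    linarith
  -- smoothness upper bound
  have hupper : ∀ x z, F x - F z - ⟪F' z, x - z⟫ ≤ γ⁻¹ * (1 - γ*m)/2 * ‖x - z‖^2 := by
    intro x z
    have hB := hBreg x z
    have hD := hDlow (Y x) (Y z)
    have hq := (hbounds (x - z)).1
    have h9 : γ*(m*‖x - z‖^2) ≤ γ*⟪H (x-z), x-z⟫ :=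
      mul_le_mul_of_nonneg_left hq (le_of_lt hγ0)
    have hsub : (‖x - z‖^2 - γ*⟪H (x-z), x-z⟫)/2
          - (ρ (Y x) - ρ (Y z) - ⟪P (Y z), Y x - Y z⟫)
        ≤ (1 - γ*m)*‖x - z‖^2/2 := by
      generalize hA : ‖x - z‖^2 = A at *
      generalize hBB : (⟪H (x-z), x-z⟫ : ℝ) = B at *
      generalize hCC : (ρ (Y x) : ℝ) = C at *
      generalize hDD : (ρ (Y z) : ℝ) = D at *
      generalize hEE : (⟪P (Y z), Y x - Y z⟫ : ℝ) = E at *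
      linarith [hD, h9]
    have hmul := mul_le_mul_of_nonneg_left hsub (le_of_lt (inv_pos.mpr hγ0))
    rw [hB]
    calc γ⁻¹ * ((‖x - z‖^2 - γ*⟪H (x-z), x-z⟫)/2
          - (ρ (Y x) - ρ (Y z) - ⟪P (Y z), Y x - Y z⟫))
        ≤ γ⁻¹ * ((1 - γ*m)*‖x - z‖^2/2) := hmul
      _ = γ⁻¹ * (1 - γ*m)/2 * ‖x - z‖^2 := by ring
  -- σ and the smoothness constant are nonnegative when needed
  have habs : ∀ x z, |F x - F z - ⟪F' z, x - z⟫| ≤ γ⁻¹ * (1 - γ*m)/2 * ‖x - z‖^2 := by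
    intro x z
    rcases eq_or_ne x z with rfl|hxz
    · simp
    have hU : 0 < ‖x - z‖^2 := pow_pos (norm_pos_iff.mpr (sub_ne_zero.mpr hxz)) 2
    have hmL : m ≤ L := by
      have h1 := (hbounds (x - z)).1
      have h2 := (hbounds (x - z)).2
      nlinarith
    have hγm : γ*m < 1 := lt_of_le_of_lt (mul_le_mul_of_nonneg_left hmL (le_of_lt hγ0)) hγL
    have hσ0 : 0 ≤ σ := by
      rw [hσdef]
      apply le_min
      · nlinarith
      · nlinarith [le_trans hm0 hmL]
    have hC0 : 0 ≤ γ⁻¹ * (1 - γ*m)/2 := by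
      have : 0 ≤ γ⁻¹ := le_of_lt (inv_pos.mpr hγ0)
      nlinarith
    rw [abs_le]
    constructor
    · have h1 := hstrong x z
      nlinarith [mul_nonneg hσ0 (le_of_lt hU), mul_nonneg hC0 (le_of_lt hU)]
    · exact hupper x z
  refine ⟨⟨F', fun x => ?_, fun x z => habs x z⟩, ?_⟩
  · -- HasGradientAt
    rw [hasGradientAt_iff_isLittleO, Asymptotics.isLittleO_iff]
    intro c hc
    set Cc : ℝ := γ⁻¹ * (1 - γ*m)/2 with hCc
    have hδpos : 0 < c/(|Cc|+1) := by positivity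
    filter_upwards [Metric.ball_mem_nhds x hδpos] with x' hx'
    rw [Metric.mem_ball, dist_eq_norm] at hx'
    have h2 := habs x' x
    have hCle : Cc ≤ |Cc| + 1 := by linarith [le_abs_self Cc]
    have hk1 : (|Cc|+1)*‖x' - x‖ ≤ (|Cc|+1)*(c/(|Cc|+1)) :=
      mul_le_mul_of_nonneg_left (le_of_lt hx') (by positivity)
    have hk2 : (|Cc|+1)*(c/(|Cc|+1)) = c := mul_div_cancel₀ _ (by positivity)
    rw [Real.norm_eq_abs]
    have h3 : Cc * ‖x' - x‖^2 ≤ ((|Cc|+1)*‖x' - x‖) * ‖x' - x‖ := by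
      calc Cc * ‖x' - x‖^2 ≤ (|Cc|+1) * ‖x' - x‖^2 :=
            mul_le_mul_of_nonneg_right hCle (by positivity)
        _ = ((|Cc|+1)*‖x' - x‖) * ‖x' - x‖ := by ring
    have h4 : ((|Cc|+1)*‖x' - x‖) * ‖x' - x‖ ≤ c * ‖x' - x‖ := by
      apply mul_le_mul_of_nonneg_right _ (norm_nonneg _)
      exact le_trans hk1 (le_of_eq hk2)
    calc |F x' - F x - ⟪F' x, x' - x⟫| ≤ Cc * ‖x' - x‖^2 := h2
      _ ≤ c * ‖x' - x‖ := le_trans h3 h4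
  · -- convexity
    refine ⟨convex_univ, ?_⟩
    intro x _ y _ a b ha hb hab
    have hb' : b = 1 - a := by linarith
    subst hb'
    set z := a • x + (1 - a) • y with hz
    dsimp only
    have h1 := hstrong x z
    have h2 := hstrong y z
    have eq0 : a • (x - z) + (1 - a) • (y - z) = 0 := by
      rw [hz]; module
    have eq5 : a*⟪F' z, x - z⟫ + (1-a)*⟪F' z, y - z⟫ = 0 := by
      have : ⟪F' z, a • (x - z) + (1 - a) • (y - z)⟫ = 0 := by
        rw [eq0, inner_zero_right]
      rw [inner_add_right, real_inner_smul_right, real_inner_smul_right] at this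
      linarith
    have eq1 : ‖x - z‖^2 = (1-a)^2*‖x-y‖^2 := by
      have : x - z = (1-a) • (x - y) := by rw [hz]; module
      rw [this, norm_smul]
      simp only [Real.norm_eq_abs, mul_pow, sq_abs]
    have eq2 : ‖y - z‖^2 = a^2*‖x-y‖^2 := by
      have : y - z = (-a) • (x - y) := by rw [hz]; module
      rw [this, norm_smul]
      simp only [Real.norm_eq_abs, mul_pow, sq_abs]
      ring_nf
    have eq3 : ‖z‖^2 = a^2*‖x‖^2 + 2*(a*(1-a))*⟪x,y⟫ + (1-a)^2*‖y‖^2 := by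
      rw [hz, norm_add_sq_real, norm_smul, norm_smul, real_inner_smul_left,
        real_inner_smul_right]
      simp only [Real.norm_eq_abs, mul_pow, sq_abs]
      ring
    have eq4 : ‖x-y‖^2 = ‖x‖^2 - 2*⟪x,y⟫ + ‖y‖^2 := by
      rw [norm_sub_sq_real]
    have eq3' : ‖z‖^2 = a*‖x‖^2 + (1-a)*‖y‖^2 - a*(1-a)*‖x-y‖^2 := by
      rw [eq3, eq4]; ring
    rw [eq1] at h1
    rw [eq2] at h2
    simp only [smul_eq_mul]
    have hm1 := mul_le_mul_of_nonneg_left h1 ha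
    have hm2 := mul_le_mul_of_nonneg_left h2 hb
    rw [eq3']
    linarith [hm1, hm2, eq5]
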